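/- The set φ(W) ⊂ B⁺ of canonical lifts of Weyl group elements equals the set of left factors of Δ and also equals the set of right factors of Δ, where Δ = φ(w₀) is the lift of the longest element. In particular, φ(W) is closed under taking left factors and under taking right factors in B⁺. -/

import Mathlib

open CoxeterSystem

variable {B : Type*}

/-- The braid relations on the free monoid over `B`, determined by the Coxeter matrix `M`. -/
def braidRelsM (M : CoxeterMatrix B) : FreeMonoid B → FreeMonoid B → Prop :=
  fun a b => ∃ i j : B,
    a = FreeMonoid.ofList (alternatingWord i j (M i j)) ∧
    b = FreeMonoid.ofList (alternatingWord j i (M i j))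

/-- The braid monoid (positive braid monoid) `B⁺` of type `M`. -/
abbrev BraidMonoid (M : CoxeterMatrix B) := PresentedMonoid (braidRelsM M)

/-- The image in the braid monoid of a word in the generators. -/
def braidWordM (M : CoxeterMatrix B) (l : List B) : BraidMonoid M :=
  PresentedMonoid.mk (braidRelsM M) (FreeMonoid.ofList l)

/-- The braid relations as elements of the free group over `B`. -/
def braidRelsG (M : CoxeterMatrix B) : Set (FreeGroup B) :=
  { r | ∃ i j : B, r =
      (List.map FreeGroup.of (alternatingWord i j (M i j))).prod *
      ((List.map FreeGroup.of (alternatingWord j i (M i j))).prod)⁻¹ }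

/-- The Artin braid group of type `M`. -/
abbrev BraidGroup (M : CoxeterMatrix B) := PresentedGroup (braidRelsG M)

/-- The image in the braid group of a word in the generators. -/
def braidWordG (M : CoxeterMatrix B) (l : List B) : BraidGroup M :=
  (List.map (fun i => (PresentedGroup.of i : BraidGroup M)) l).prod


open CoxeterSystem List

attribute [local instance] Classical.propDecidable

namespace BraidAux

variable {B : Type*} {W : Type*} [Group W] {M : CoxeterMatrix B} (cs : CoxeterSystem M W)

local prefix:100 "s" => cs.simple
local prefix:100 "π" => cs.wordProd
local prefix:100 "ℓ" => cs.length
local prefix:100 "ris" => cs.rightInvSeq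

lemma zmod2_add_self : ∀ x : ZMod 2, x + x = 0 := by decide

lemma simple_conj_conj (i : B) (t : W) : s i * (s i * t * s i) * s i = t := by
  have hss := cs.simple_mul_simple_self i
  simp only [← mul_assoc, hss, one_mul]
  rw [mul_assoc, hss, mul_one]

lemma simple_conj_eq_iff (i : B) (t : W) : (s i * t * s i = s i) ↔ (t = s i) := by
  constructor
  · intro h
    calc t = s i * (s i * t * s i) * s i := (simple_conj_conj cs i t).symm
    _ = s i * s i * s i := by rw [h]
    _ = s i := by rw [cs.simple_mul_simple_self, one_mul]
  · rintro rfl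
    rw [cs.simple_mul_simple_self, one_mul]

/-- The basic involution of the Björner–Brenti permutation representation. -/
noncomputable def eta (i : B) : Equiv.Perm (W × ZMod 2) :=
  Function.Involutive.toPerm
    (fun p => (s i * p.1 * s i, p.2 + if p.1 = s i then 1 else 0))
    (by
      rintro ⟨t, e⟩
      refine Prod.ext (simple_conj_conj cs i t) ?_
      show e + (if t = s i then 1 else 0) + (if s i * t * s i = s i then 1 else 0) = e
      have : (if s i * t * s i = s i then (1:ZMod 2) else 0) = (if t = s i then 1 else 0) := by
        rcases (simple_conj_eq_iff cs i t) with ⟨h1, h2⟩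
        by_cases h : t = s i
        · rw [if_pos h, if_pos (h2 h)]
        · rw [if_neg h, if_neg (fun hh => h (h1 hh))]
      rw [this, add_assoc, zmod2_add_self, add_zero])

lemma eta_apply (i : B) (t : W) (e : ZMod 2) :
    eta cs i (t, e) = (s i * t * s i, e + if t = s i then 1 else 0) := rfl

/-- Product of `eta`s along a word. -/
noncomputable def etaP (ω : List B) : Equiv.Perm (W × ZMod 2) := (ω.map (eta cs)).prod

@[simp] lemma etaP_nil : etaP cs ([] : List B) = 1 := rfl

lemma etaP_cons (i : B) (ω : List B) : etaP cs (i :: ω) = eta cs i * etaP cs ω := by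
  simp [etaP]

lemma etaP_append (ω ω' : List B) : etaP cs (ω ++ ω') = etaP cs ω * etaP cs ω' := by
  simp [etaP]

lemma etaP_apply (ω : List B) (t : W) (e : ZMod 2) :
    etaP cs ω (t, e) = (π ω * t * (π ω)⁻¹,
      e + ((List.count t (ris ω) : ℕ) : ZMod 2)) := by
  induction ω generalizing e with
  | nil => simp
  | cons i ω ih =>
    rw [etaP_cons, Equiv.Perm.mul_apply, ih, eta_apply]
    have hconj : s i * (π ω * t * (π ω)⁻¹) * s i = π (i :: ω) * t * (π (i :: ω))⁻¹ := by
      rw [cs.wordProd_cons]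
      rw [mul_inv_rev, cs.inv_simple]
      group
    have hcount : List.count t (ris (i :: ω)) =
        List.count t (ris ω) + (if (π ω) * t * (π ω)⁻¹ = s i then 1 else 0) := by
      show List.count t ((π ω)⁻¹ * (s i) * (π ω) :: ris ω) = _
      rw [List.count_cons]
      congr 1
      have hiff : ((π ω)⁻¹ * s i * π ω = t) ↔ (π ω * t * (π ω)⁻¹ = s i) := by
        constructor
        · rintro rfl; group
        · intro h; rw [← h]; group
      simp only [beq_iff_eq]
      by_cases h : π ω * t * (π ω)⁻¹ = s i
      · rw [if_pos h, if_pos (hiff.mpr h)]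
      · rw [if_neg h, if_neg (fun hb => h (hiff.mp hb))]
    rw [hconj, hcount]
    refine Prod.ext rfl ?_
    show e + _ + _ = _
    push_cast
    ring

end BraidAux
section Part2

namespace BraidAux

open CoxeterSystem List

variable {B : Type*} {W : Type*} [Group W] {M : CoxeterMatrix B} (cs : CoxeterSystem M W)

local prefix:100 "s" => cs.simple
local prefix:100 "π" => cs.wordProd
local prefix:100 "ℓ" => cs.length
local prefix:100 "ris" => cs.rightInvSeq

section TwoGen

variable (i j : B)

/-- Products of prefixes of the infinite alternating word `... i j i j` (reading lengths). -/
noncomputable def cc (r : ℕ) : W := π (alternatingWord i j r)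

lemma cc_zero : cc cs i j 0 = 1 := by simp [cc, alternatingWord]

lemma cc_succ (r : ℕ) : cc cs i j (r + 1) = s (if Even r then j else i) * cc cs i j r := by
  rw [cc, cc, alternatingWord_succ', cs.wordProd_cons]

/-- `E = π(alternatingWord i j (M i j))`. -/
noncomputable def EE : W := cc cs i j (M i j)

lemma EE_braid : π (alternatingWord j i (M i j)) = EE cs i j := by
  have := cs.wordProd_braidWord_eq j i
  unfold CoxeterSystem.braidWord at this
  rw [M.symmetric j i] at this
  exact this

lemma comm_jj : s (if Even (M i j) then j else i) * EE cs i j = EE cs i j * s j := by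
  have h1 := cc_succ cs i j (M i j)
  have h2 : cc cs i j (M i j + 1) = EE cs i j * s j := by
    rw [cc, alternatingWord_succ, cs.wordProd_concat, EE_braid]
  rw [h2] at h1
  exact h1.symm

lemma comm_ii : s (if Even (M i j) then i else j) * EE cs i j = EE cs i j * s i := by
  have h1 : π (alternatingWord j i (M i j + 1))
      = s (if Even (M i j) then i else j) * π (alternatingWord j i (M i j)) := by
    rw [alternatingWord_succ', cs.wordProd_cons]
  have h2 : π (alternatingWord j i (M i j + 1)) = EE cs i j * s i := by
    rw [alternatingWord_succ, cs.wordProd_concat]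
    rfl
  rw [EE_braid] at h1
  rw [h2] at h1
  exact h1.symm

lemma comm_main (k : ℕ) : s (if Even (k + M i j) then j else i) * EE cs i j
    = EE cs i j * s (if Even k then j else i) := by
  by_cases hm : Even (M i j) <;> by_cases hk : Even k
  · have hkm : Even (k + M i j) := by simp [Nat.even_add, hm, hk]
    rw [if_pos hkm, if_pos hk]
    have h := comm_jj cs i j; rwa [if_pos hm] at h
  · have hkm : ¬ Even (k + M i j) := by
      simp [Nat.even_add, hm]; exact Nat.not_even_iff_odd.mp hk
    rw [if_neg hkm, if_neg hk]
    have h := comm_ii cs i j; rwa [if_pos hm] at h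
  · have hkm : ¬ Even (k + M i j) := by simp [Nat.even_add, hm]; tauto
    rw [if_neg hkm, if_pos hk]
    have h := comm_jj cs i j; rwa [if_neg hm] at h
  · have hkm : Even (k + M i j) := by
      simp [Nat.even_add, hm]; exact Nat.not_even_iff_odd.mp hk
    rw [if_pos hkm, if_neg hk]
    have h := comm_ii cs i j; rwa [if_neg hm] at h

lemma cc_add (k : ℕ) : cc cs i j (k + M i j) = EE cs i j * cc cs i j k := by
  induction k with
  | zero => rw [Nat.zero_add, cc_zero, mul_one]; rfl
  | succ k ih =>
    have h0 : k + 1 + M i j = (k + M i j) + 1 := by omega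
    calc cc cs i j (k + 1 + M i j) = cc cs i j ((k + M i j) + 1) := by rw [h0]
    _ = s (if Even (k + M i j) then j else i) * cc cs i j (k + M i j) := cc_succ cs i j _
    _ = s (if Even (k + M i j) then j else i) * EE cs i j * cc cs i j k := by
        rw [ih, ← mul_assoc]
    _ = EE cs i j * s (if Even k then j else i) * cc cs i j k := by rw [comm_main]
    _ = EE cs i j * cc cs i j (k + 1) := by rw [mul_assoc, ← cc_succ]

/-- The `r`-th "virtual reflection" of the dihedral sequence. -/
noncomputable def tau (r : ℕ) : W := (cc cs i j r)⁻¹ * cc cs i j (r + 1)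

lemma tau_add (r : ℕ) : tau cs i j (r + M i j) = tau cs i j r := by
  unfold tau
  have h1 := cc_add cs i j r
  have h2 : cc cs i j (r + M i j + 1) = EE cs i j * cc cs i j (r + 1) := by
    have : r + M i j + 1 = (r + 1) + M i j := by omega
    rw [this, cc_add]
  rw [h1, h2, mul_inv_rev]
  group

lemma tau_eq (r : ℕ) :
    tau cs i j r = (cc cs i j r)⁻¹ * s (if Even r then j else i) * cc cs i j r := by
  unfold tau
  rw [cc_succ, ← mul_assoc]

lemma drop_alternatingWord (d n : ℕ) :
    List.drop d (alternatingWord i j n) = alternatingWord i j (n - d) := by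
  induction d generalizing n with
  | zero => simp
  | succ d ih =>
    cases n with
    | zero => simp [alternatingWord]
    | succ n =>
      rw [alternatingWord_succ', List.drop_succ_cons, ih, Nat.succ_sub_succ]

lemma get?_alternatingWord {k n : ℕ} (hk : k < n) :
    (alternatingWord i j n)[k]? = some (if Even (n - 1 - k) then j else i) := by
  have h1 : (alternatingWord i j n)[k]? = (List.drop k (alternatingWord i j n))[0]? := by
    rw [List.getElem?_drop, Nat.add_zero]
  rw [h1, drop_alternatingWord]
  have h2 : n - k = (n - 1 - k) + 1 := by omega
  rw [h2, alternatingWord_succ']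
  rfl

lemma ris_alt_entry {m : ℕ} (hm : m = M i j) (k : ℕ) (hk : k < 2 * m) :
    (ris (alternatingWord i j (2 * m))).getD k 1 = tau cs i j (2 * m - 1 - k) := by
  rw [cs.getD_rightInvSeq, drop_alternatingWord, get?_alternatingWord i j hk]
  have h3 : 2 * m - (k + 1) = 2 * m - 1 - k := by omega
  rw [h3]
  rw [tau_eq]
  rfl

end TwoGen

end BraidAux

end Part2
section Part3

namespace BraidAux

open CoxeterSystem List

variable {B : Type*} {W : Type*} [Group W] {M : CoxeterMatrix B} (cs : CoxeterSystem M W)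

local prefix:100 "s" => cs.simple
local prefix:100 "π" => cs.wordProd
local prefix:100 "ℓ" => cs.length
local prefix:100 "ris" => cs.rightInvSeq

variable (i j : B)

lemma ris_alt_halves {m : ℕ} (hm : m = M i j) :
    List.take m (ris (alternatingWord i j (2 * m))) =
      List.drop m (ris (alternatingWord i j (2 * m))) := by
  have hlen : (ris (alternatingWord i j (2 * m))).length = 2 * m := by
    rw [cs.length_rightInvSeq, length_alternatingWord]
  apply List.ext_getElem
  · simp [hlen]; omega
  · intro k hk1 hk2
    have hk : k < m := by simp [hlen] at hk1; omega
    have e1 : (List.take m (ris (alternatingWord i j (2 * m))))[k]'hk1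
        = (ris (alternatingWord i j (2 * m))).getD k 1 := by
      rw [List.getElem_take]
      exact (List.getD_eq_getElem _ 1 _).symm
    have e2 : (List.drop m (ris (alternatingWord i j (2 * m))))[k]'hk2
        = (ris (alternatingWord i j (2 * m))).getD (m + k) 1 := by
      rw [List.getElem_drop]
      exact (List.getD_eq_getElem _ 1 _).symm
    rw [e1, e2, ris_alt_entry cs i j hm k (by omega),
      ris_alt_entry cs i j hm (m + k) (by omega)]
    have h1 : 2 * m - 1 - k = (2 * m - 1 - (m + k)) + M i j := by omega
    rw [h1, tau_add]

lemma eta_braid : (eta cs i * eta cs j) ^ M i j = 1 := by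
  set m := M i j with hm
  have key : (eta cs i * eta cs j) ^ m = etaP cs (alternatingWord i j (2 * m)) := by
    induction m with
    | zero => simp [alternatingWord]
    | succ k ih =>
      have h2 : 2 * (k + 1) = (2 * k) + 1 + 1 := by omega
      rw [h2, alternatingWord_succ', alternatingWord_succ']
      have hodd : ¬ Even (2 * k + 1) := by simp [Nat.even_add_one]
      have heven : Even (2 * k) := even_two_mul k
      rw [if_neg hodd, if_pos heven, etaP_cons, etaP_cons, pow_succ']
      rw [ih, mul_assoc]
  rw [key]
  apply Equiv.ext
  rintro ⟨t, e⟩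
  rw [etaP_apply]
  have hπ : π (alternatingWord i j (2 * m)) = 1 := by
    rw [cs.prod_alternatingWord_eq_mul_pow]
    have : Even (2 * m) := even_two_mul m
    rw [if_pos this]
    have : 2 * m / 2 = m := by omega
    rw [this, one_mul, hm, cs.simple_mul_simple_pow]
  have hcount : ((List.count t (ris (alternatingWord i j (2 * m))) : ℕ) : ZMod 2) = 0 := by
    have hsplit : ris (alternatingWord i j (2 * m)) =
        List.take m (ris (alternatingWord i j (2 * m))) ++
          List.drop m (ris (alternatingWord i j (2 * m))) := (List.take_append_drop _ _).symm
    rw [hsplit, List.count_append, ← ris_alt_halves cs i j hm]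
    push_cast
    rw [zmod2_add_self]
  rw [hπ, hcount]
  simp

/-- The Björner–Brenti permutation representation of `W`. -/
noncomputable def rho : W →* Equiv.Perm (W × ZMod 2) :=
  cs.lift ⟨eta cs, fun i j => eta_braid cs i j⟩

lemma rho_simple (i : B) : rho cs (s i) = eta cs i :=
  cs.lift_apply_simple _ i

lemma rho_wordProd (ω : List B) : rho cs (π ω) = etaP cs ω := by
  induction ω with
  | nil => simp [etaP]
  | cons i ω ih => rw [cs.wordProd_cons, map_mul, rho_simple, ih, etaP_cons]

/-- The reflection-parity cocycle. -/
noncomputable def nn (w t : W) : ZMod 2 := (rho cs w (t, 0)).2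

lemma nn_count (ω : List B) (t : W) :
    nn cs (π ω) t = ((List.count t (ris ω) : ℕ) : ZMod 2) := by
  unfold nn
  rw [rho_wordProd, etaP_apply, zero_add]

lemma rho_apply (w t : W) (e : ZMod 2) :
    rho cs w (t, e) = (w * t * w⁻¹, e + nn cs w t) := by
  obtain ⟨ω, -, rfl⟩ := cs.exists_reduced_word' w
  rw [rho_wordProd, etaP_apply, nn_count]

lemma nn_mul (u v t : W) : nn cs (u * v) t = nn cs v t + nn cs u (v * t * v⁻¹) := by
  unfold nn
  rw [map_mul, Equiv.Perm.mul_apply]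
  rw [rho_apply cs v t 0, zero_add, rho_apply cs u (v * t * v⁻¹) (nn cs v t)]
  rfl

lemma nn_one (t : W) : nn cs 1 t = 0 := by unfold nn; rw [map_one]; rfl

end BraidAux

end Part3
section Part4

namespace BraidAux

open CoxeterSystem List

variable {B : Type*} {W : Type*} [Group W] {M : CoxeterMatrix B} (cs : CoxeterSystem M W)

local prefix:100 "s" => cs.simple
local prefix:100 "π" => cs.wordProd
local prefix:100 "ℓ" => cs.length
local prefix:100 "ris" => cs.rightInvSeq

lemma zmod2_cases : ∀ x : ZMod 2, x = 0 ∨ x = 1 := by decide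

lemma mem_ris_of_nn_one {w t : W} (h : nn cs w t = 1) {ω : List B} (hω : π ω = w) :
    t ∈ ris ω := by
  subst hω
  rw [nn_count] at h
  by_contra hmem
  rw [List.count_eq_zero_of_not_mem hmem] at h
  simp at h

lemma nn_one_of_reduced_mem {ω : List B} (hred : cs.IsReduced ω) {t : W}
    (h : t ∈ ris ω) : nn cs (π ω) t = 1 := by
  rw [nn_count, List.count_eq_one_of_mem (hred.nodup_rightInvSeq) h]
  rfl

lemma isReflection_of_nn_one {w t : W} (h : nn cs w t = 1) : cs.IsReflection t := by
  obtain ⟨ω, -, rfl⟩ := cs.exists_reduced_word' w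
  exact cs.isReflection_of_mem_rightInvSeq ω (mem_ris_of_nn_one cs h rfl)

lemma length_eq_ncard (w : W) : ℓ w = Set.ncard {t | nn cs w t = 1} := by
  obtain ⟨ω, hred, rfl⟩ := cs.exists_reduced_word' w
  have hset : {t | nn cs (π ω) t = 1} = ((ris ω).toFinset : Set W) := by
    ext t
    simp only [Set.mem_setOf_eq, Finset.coe_sort_coe, List.coe_toFinset, Set.mem_setOf_eq,
      List.mem_toFinset]
    constructor
    · intro h; exact mem_ris_of_nn_one cs h rfl
    · intro h; exact nn_one_of_reduced_mem cs hred h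
  rw [hset, Set.ncard_coe_finset, List.toFinset_card_of_nodup (hred.nodup_rightInvSeq),
    cs.length_rightInvSeq]
  exact hred

lemma nn_simple_self (i : B) : nn cs (s i) (s i) = 1 := by
  have h := nn_count cs [i] (s i)
  rw [cs.wordProd_singleton] at h
  rw [h, cs.rightInvSeq_singleton]
  simp

lemma nn_inv (u t : W) : nn cs u⁻¹ t = nn cs u (u⁻¹ * t * u) := by
  have h := nn_mul cs u⁻¹ u (u⁻¹ * t * u)
  rw [inv_mul_cancel, nn_one] at h
  have harg : u * (u⁻¹ * t * u) * u⁻¹ = t := by group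
  rw [harg] at h
  have := zmod2_add_self
  rcases zmod2_cases (nn cs u⁻¹ t) with h0 | h0 <;>
    rcases zmod2_cases (nn cs u (u⁻¹ * t * u)) with h1 | h1 <;>
    rw [h0, h1] <;> rw [h0, h1] at h <;> first | rfl | (exfalso; revert h; decide)

lemma nn_reflection_self {t : W} (ht : cs.IsReflection t) : nn cs t t = 1 := by
  obtain ⟨u, i, rfl⟩ := ht
  set r := u * s i * u⁻¹ with hr
  have h1 : nn cs r r = nn cs (s i * u⁻¹) r + nn cs u (s i) := by
    have h := nn_mul cs u (s i * u⁻¹) r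
    have harg : (s i * u⁻¹) * r * (s i * u⁻¹)⁻¹ = s i := by
      rw [hr]; group
    rw [harg] at h
    rw [hr] at h ⊢
    rw [← mul_assoc] at h
    exact h
  have h2 : nn cs (s i * u⁻¹) r = nn cs u⁻¹ r + nn cs (s i) (s i) := by
    have h := nn_mul cs (s i) u⁻¹ r
    have harg : u⁻¹ * r * u⁻¹⁻¹ = s i := by rw [hr]; group
    rw [harg] at h
    exact h
  have h3 : nn cs u⁻¹ r = nn cs u (s i) := by
    rw [nn_inv]
    congr 1
    rw [hr]; group
  rw [h1, h2, h3, nn_simple_self]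
  rcases zmod2_cases (nn cs u (s i)) with h0 | h0 <;> rw [h0] <;> decide

lemma nn_one_of_isRightInversion {w t : W} (ht : cs.IsReflection t)
    (hlt : ℓ (w * t) < ℓ w) : nn cs w t = 1 := by
  rcases zmod2_cases (nn cs w t) with h0 | h0
  · exfalso
    have h1 : nn cs (w * t) t = 1 := by
      have h := nn_mul cs w t t
      have harg : t * t * t⁻¹ = t := by group
      rw [harg, h0, nn_reflection_self cs ht] at h
      rw [h]; decide
    obtain ⟨ω, hred, hω⟩ := cs.exists_reduced_word' (w * t)
    have hmem : t ∈ ris ω := mem_ris_of_nn_one cs (hω ▸ h1) hω.symm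
    have := cs.isRightInversion_of_mem_rightInvSeq hred hmem
    rw [← hω] at this
    have h2 : ℓ (w * t * t) < ℓ (w * t) := this.2
    rw [mul_assoc, ht.mul_self, mul_one] at h2
    omega
  · exact h0

variable [Finite W]

/-- The key fact: lengths add in a factorization through the longest element. -/
lemma length_add_of_max (w₀ : W) (hw₀ : ∀ w : W, ℓ w ≤ ℓ w₀) (w : W) :
    ℓ w + ℓ (w⁻¹ * w₀) = ℓ w₀ := by
  classical
  set v := w⁻¹ * w₀ with hv
  have hwv : w * v = w₀ := by rw [hv]; group
  -- every reflection is an inversion of w₀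
  have hall : ∀ t : W, cs.IsReflection t → nn cs w₀ t = 1 := by
    intro t ht
    apply nn_one_of_isRightInversion cs ht
    have hne := ht.length_mul_left_ne w₀
    have hle := hw₀ (w₀ * t)
    omega
  have hSet : {t | nn cs w₀ t = 1} = {t | cs.IsReflection t} := by
    ext t
    exact ⟨fun h => isReflection_of_nn_one cs h, fun h => hall t h⟩
  -- decomposition
  have hdec : ∀ t : W, nn cs w₀ t = nn cs v t + nn cs w (v * t * v⁻¹) := by
    intro t; rw [← hwv, nn_mul]
  set A := {t | nn cs v t = 1} with hA
  set Bs := {t | nn cs w (v * t * v⁻¹) = 1} with hB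
  have hunion : {t | nn cs w₀ t = 1} = A ∪ Bs := by
    ext t
    simp only [Set.mem_setOf_eq, Set.mem_union, hA, hB]
    constructor
    · intro h
      rw [hdec t] at h
      rcases zmod2_cases (nn cs v t) with h0 | h0
      · right
        rcases zmod2_cases (nn cs w (v * t * v⁻¹)) with h1 | h1
        · exfalso; rw [h0, h1] at h; revert h; decide
        · exact h1
      · left; exact h0
    · rintro (h0 | h0)
      · exact hall t (isReflection_of_nn_one cs h0)
      · have hrefl : cs.IsReflection (v * t * v⁻¹) := isReflection_of_nn_one cs h0
        have := hrefl.conj v⁻¹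
        have harg : v⁻¹ * (v * t * v⁻¹) * v⁻¹⁻¹ = t := by group
        rw [harg] at this
        exact hall t this
  have hdisj : Disjoint A Bs := by
    rw [Set.disjoint_left]
    intro t htA htB
    have := hdec t
    rw [hA] at htA; rw [hB] at htB
    simp only [Set.mem_setOf_eq] at htA htB
    rw [htA, htB] at this
    have h1 : nn cs w₀ t = 1 := hall t (isReflection_of_nn_one cs htA)
    rw [h1] at this
    revert this; decide
  have hBcard : Bs.ncard = ℓ w := by
    have himg : Bs = (fun t => v⁻¹ * t * v) '' {t | nn cs w t = 1} := by
      ext t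
      simp only [hB, Set.mem_setOf_eq, Set.mem_image]
      constructor
      · intro h
        exact ⟨v * t * v⁻¹, h, by group⟩
      · rintro ⟨t', ht', rfl⟩
        have : v * (v⁻¹ * t' * v) * v⁻¹ = t' := by group
        rw [this]
        exact ht'
    rw [himg, Set.ncard_image_of_injective _ (by
      intro a b hab
      simpa using mul_left_cancel (mul_right_cancel hab)), ← length_eq_ncard]
  have hAcard : A.ncard = ℓ v := (length_eq_ncard cs v).symm
  have hfinA : A.Finite := Set.toFinite A
  have hfinB : Bs.Finite := Set.toFinite Bs
  have hcard0 : ℓ w₀ = A.ncard + Bs.ncard := by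
    rw [length_eq_ncard cs w₀, hunion, Set.ncard_union_eq hdisj hfinA hfinB]
  rw [hcard0, hAcard, hBcard]
  omega

lemma length_add_of_max' (w₀ : W) (hw₀ : ∀ w : W, ℓ w ≤ ℓ w₀) (w : W) :
    ℓ (w₀ * w⁻¹) + ℓ w = ℓ w₀ := by
  have h := length_add_of_max cs w₀ hw₀ (w₀ * w⁻¹)
  have : (w₀ * w⁻¹)⁻¹ * w₀ = w := by group
  rw [this] at h
  omega

end BraidAux

end Part4
section Part5

namespace BraidAux

open CoxeterSystem List

variable {B : Type*} {W : Type*} [Group W] {M : CoxeterMatrix B} (cs : CoxeterSystem M W)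

local prefix:100 "s" => cs.simple
local prefix:100 "π" => cs.wordProd
local prefix:100 "ℓ" => cs.length

/-- The projection from the braid monoid to the Coxeter group. -/
noncomputable def projW : BraidMonoid M →* W :=
  PresentedMonoid.lift cs.simple (by
    rintro a b ⟨i, j, rfl, rfl⟩
    rw [FreeMonoid.lift_ofList, FreeMonoid.lift_ofList]
    have := cs.wordProd_braidWord_eq i j
    unfold CoxeterSystem.wordProd CoxeterSystem.braidWord at this
    rwa [M.symmetric j i] at this)

lemma projW_braidWordM (l : List B) : projW cs (braidWordM M l) = π l := by
  have h1 : projW cs (braidWordM M l) = FreeMonoid.lift cs.simple (FreeMonoid.ofList l) := rfl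
  rw [h1, FreeMonoid.lift_ofList]
  rfl

lemma ofAdd_prod (l : List B) :
    ((l.map (fun (_ : B) => Multiplicative.ofAdd (1:ℕ))).prod) = Multiplicative.ofAdd l.length := by
  induction l with
  | nil => rfl
  | cons x l ih =>
    rw [List.map_cons, List.prod_cons, ih, List.length_cons, ← ofAdd_add]
    congr 1
    omega

/-- The length homomorphism on the braid monoid. -/
def lenM : BraidMonoid M →* Multiplicative ℕ :=
  PresentedMonoid.lift (fun _ => Multiplicative.ofAdd 1) (by
    rintro a b ⟨i, j, rfl, rfl⟩
    rw [FreeMonoid.lift_ofList, FreeMonoid.lift_ofList]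
    rw [ofAdd_prod, ofAdd_prod, length_alternatingWord, length_alternatingWord])

lemma lenM_braidWordM (l : List B) :
    lenM (M := M) (braidWordM M l) = Multiplicative.ofAdd l.length := by
  have h1 : lenM (M := M) (braidWordM M l)
      = FreeMonoid.lift (fun _ => Multiplicative.ofAdd 1) (FreeMonoid.ofList l) := rfl
  rw [h1, FreeMonoid.lift_ofList, ofAdd_prod]

lemma braidWordM_append (l l' : List B) :
    braidWordM M (l ++ l') = braidWordM M l * braidWordM M l' := by
  unfold braidWordM
  rw [FreeMonoid.ofList_append, map_mul]

lemma braidWordM_surjective (α : BraidMonoid M) : ∃ l : List B, α = braidWordM M l := by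
  obtain ⟨x, rfl⟩ := PresentedMonoid.surjective_mk α
  exact ⟨FreeMonoid.toList x, rfl⟩

lemma braidWordM_eq_inv (l l' : List B) (h : braidWordM M l = braidWordM M l') :
    π l = π l' ∧ l.length = l'.length := by
  constructor
  · have := congrArg (projW cs) h
    rwa [projW_braidWordM, projW_braidWordM] at this
  · have := congrArg (lenM (M := M)) h
    rw [lenM_braidWordM, lenM_braidWordM] at this
    exact Multiplicative.ofAdd.injective this

end BraidAux

end Part5

/-- `φ(W) ⊆ B⁺` equals the set of left factors of `Δ = φ(w₀)` and also the set
of right factors of `Δ`; in particular `φ(W)` is closed under taking left and right factors.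
(In `B⁺` every factorization is automatically reduced since length is additive.) -/
theorem range_section_eq_factors_of_garside_element {W : Type*} [Group W] [Finite W]
    (M : CoxeterMatrix B) (cs : CoxeterSystem M W)
    (φ : W → BraidMonoid M)
    (hφ : ∀ ω : List B, cs.IsReduced ω → φ (cs.wordProd ω) = braidWordM M ω)
    (w₀ : W) (hw₀ : ∀ w : W, cs.length w ≤ cs.length w₀) :
    Set.range φ = {α : BraidMonoid M | ∃ γ, φ w₀ = α * γ} ∧
    Set.range φ = {α : BraidMonoid M | ∃ β, φ w₀ = β * α} ∧
    (∀ α β : BraidMonoid M, α * β ∈ Set.range φ → α ∈ Set.range φ ∧ β ∈ Set.range φ) := by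
  classical
  obtain ⟨ω₀, hred₀, hw0eq⟩ := cs.exists_reduced_word' w₀
  have KL := BraidAux.length_add_of_max cs w₀ hw₀
  have KR := BraidAux.length_add_of_max' cs w₀ hw₀
  -- every φ w is a left factor of φ w₀
  have hAL : ∀ w : W, ∃ γ, φ w₀ = φ w * γ := by
    intro w
    obtain ⟨ω, hred, hw⟩ := cs.exists_reduced_word' w
    obtain ⟨ω', hred', hv⟩ := cs.exists_reduced_word' (w⁻¹ * w₀)
    have hπ : cs.wordProd (ω ++ ω') = w₀ := by
      rw [cs.wordProd_append, ← hw, ← hv]; group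
    have hredc : cs.IsReduced (ω ++ ω') := by
      unfold CoxeterSystem.IsReduced at hred hred' ⊢
      rw [hπ, List.length_append, ← hred, ← hred', ← hw, ← hv]
      exact (KL w).symm
    have h1 := hφ (ω ++ ω') hredc
    rw [hπ, BraidAux.braidWordM_append] at h1
    have h2 := hφ ω hred
    rw [← hw] at h2
    exact ⟨braidWordM M ω', by rw [h1, h2]⟩
  -- every φ w is a right factor of φ w₀
  have hAR : ∀ w : W, ∃ β, φ w₀ = β * φ w := by
    intro w
    obtain ⟨ω, hred, hw⟩ := cs.exists_reduced_word' w
    obtain ⟨ω'', hred'', hv⟩ := cs.exists_reduced_word' (w₀ * w⁻¹)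
    have hπ : cs.wordProd (ω'' ++ ω) = w₀ := by
      rw [cs.wordProd_append, ← hw, ← hv]; group
    have hredc : cs.IsReduced (ω'' ++ ω) := by
      unfold CoxeterSystem.IsReduced at hred hred'' ⊢
      rw [hπ, List.length_append, ← hred, ← hred'', ← hw, ← hv]
      exact (KR w).symm
    have h1 := hφ (ω'' ++ ω) hredc
    rw [hπ, BraidAux.braidWordM_append] at h1
    have h2 := hφ ω hred
    rw [← hw] at h2
    exact ⟨braidWordM M ω'', by rw [h1, h2]⟩
  -- factors of φ w₀ are in the image of φ
  have hLA : ∀ α γ : BraidMonoid M, φ w₀ = α * γ →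
      α ∈ Set.range φ ∧ γ ∈ Set.range φ := by
    intro α γ h
    obtain ⟨a, rfl⟩ := BraidAux.braidWordM_surjective α
    obtain ⟨c, rfl⟩ := BraidAux.braidWordM_surjective γ
    have h0 : φ w₀ = braidWordM M ω₀ := by rw [hw0eq]; exact hφ ω₀ hred₀
    have heq : braidWordM M ω₀ = braidWordM M (a ++ c) := by
      rw [← h0, h, BraidAux.braidWordM_append]
    obtain ⟨hprod, hlen⟩ := BraidAux.braidWordM_eq_inv cs _ _ heq
    have hredac : cs.IsReduced (a ++ c) := by
      unfold CoxeterSystem.IsReduced at hred₀ ⊢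
      rw [← hprod, hred₀, hlen]
    have hra : cs.IsReduced a := by
      have := hredac.take a.length
      rwa [List.take_left] at this
    have hrc : cs.IsReduced c := by
      have := hredac.drop a.length
      rwa [List.drop_left] at this
    exact ⟨⟨cs.wordProd a, hφ a hra⟩, ⟨cs.wordProd c, hφ c hrc⟩⟩
  have e1 : Set.range φ = {α : BraidMonoid M | ∃ γ, φ w₀ = α * γ} := by
    ext α
    constructor
    · rintro ⟨w, rfl⟩; exact hAL w
    · rintro ⟨γ, h⟩; exact (hLA α γ h).1
  have e2 : Set.range φ = {α : BraidMonoid M | ∃ β, φ w₀ = β * α} := by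
    ext α
    constructor
    · rintro ⟨w, rfl⟩; exact hAR w
    · rintro ⟨β, h⟩; exact (hLA β α h).2
  refine ⟨e1, e2, ?_⟩
  intro α β hmem
  rw [e1] at hmem
  obtain ⟨γ, h⟩ := hmem
  rw [mul_assoc] at h
  have hα := (hLA α (β * γ) h).1
  have hβγ : β * γ ∈ Set.range φ := (hLA α (β * γ) h).2
  rw [e1] at hβγ
  obtain ⟨δ, hδ⟩ := hβγ
  rw [mul_assoc] at hδ
  exact ⟨hα, (hLA β (γ * δ) hδ).1⟩
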